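/- Define Ψ_I(z) = ψ(1-z) + ψ(1+z) - ψ(1 - z/2) - ψ(1 + z/2), where ψ is the digamma function. Then for all z ∈ [0, 1), Ψ_I(z) ≤ 0, and Ψ_I is (weakly) decreasing on [0,1). -/

import Mathlib

noncomputable def digamma (x : ℝ) : ℝ := deriv (fun y => Real.log (Real.Gamma y)) x

noncomputable def PsiI (z : ℝ) : ℝ :=
  digamma (1 - z) + digamma (1 + z) - digamma (1 - z / 2) - digamma (1 + z / 2)

open Real Filter Topology Finset

/-! Auxiliary development: the series representation of the digamma function. -/

noncomputable def wg (n : ℕ) (y : ℝ) : ℝ := y / (n+1) - Real.log (1 + y / (n+1))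
noncomputable def wg' (n : ℕ) (y : ℝ) : ℝ := 1 / (n+1) - 1 / (n+1+y)

lemma wg_hasDeriv (n : ℕ) (y : ℝ) (hy : 0 < y) : HasDerivAt (wg n) (wg' n y) y := by
  have hn : (0:ℝ) < (n:ℝ)+1 := by positivity
  have h1 : HasDerivAt (fun z : ℝ => z / ((n:ℝ)+1)) (1/((n:ℝ)+1)) y := by
    simpa using (hasDerivAt_id y).div_const ((n:ℝ)+1)
  have h2 : HasDerivAt (fun z : ℝ => 1 + z / ((n:ℝ)+1)) (1/((n:ℝ)+1)) y := h1.const_add 1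
  have hpos : 0 < 1 + y / ((n:ℝ)+1) := by positivity
  have h3 := h2.log hpos.ne'
  have heq : (1/((n:ℝ)+1)) / (1 + y / ((n:ℝ)+1)) = 1 / ((n:ℝ)+1+y) := by field_simp
  rw [heq] at h3
  exact h1.sub h3

lemma wg'_bounds (n : ℕ) (y : ℝ) (h0 : 0 ≤ y) (h2 : y ≤ 2) :
    0 ≤ wg' n y ∧ wg' n y ≤ 2/((n:ℝ)+1)^2 := by
  have hn : (0:ℝ) < (n:ℝ)+1 := by positivity
  have hny : (0:ℝ) < (n:ℝ)+1+y := by linarith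
  constructor
  · have : 1/((n:ℝ)+1+y) ≤ 1/((n:ℝ)+1) := by
      apply one_div_le_one_div_of_le hn; linarith
    simpa [wg'] using this
  · have key : wg' n y = y / (((n:ℝ)+1)*((n:ℝ)+1+y)) := by
      unfold wg'; field_simp; ring
    rw [key, div_le_div_iff₀ (by positivity) (by positivity)]
    nlinarith [sq_nonneg ((n:ℝ)+1)]

lemma summable_base : Summable (fun n : ℕ => 2/((n:ℝ)+1)^2) := by
  have h : Summable (fun n : ℕ => 1/((n:ℝ)) ^ (2:ℕ)) := Real.summable_one_div_nat_pow.mpr one_lt_two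
  have h3 := ((summable_nat_add_iff 1).mpr h).mul_left 2
  apply h3.congr
  intro n; push_cast; ring

lemma log_ineq {t : ℝ} (ht : 0 ≤ t) : 0 ≤ t - Real.log (1+t) ∧ t - Real.log (1+t) ≤ t^2 := by
  have h1 : (0:ℝ) < 1 + t := by linarith
  constructor
  · have := Real.log_le_sub_one_of_pos h1
    linarith
  · have h2 : (0:ℝ) < 1/(1+t) := by positivity
    have := Real.log_le_sub_one_of_pos h2
    rw [Real.log_div one_ne_zero h1.ne', Real.log_one] at this
    have h3 : 1/(1+t) - 1 = -t/(1+t) := by field_simp; ring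
    rw [h3] at this
    have h5 : -t/(1+t) ≤ t^2 - t := by
      rw [div_le_iff₀ h1]; nlinarith
    linarith

lemma wg_bounds (n : ℕ) (y : ℝ) (hy : 0 ≤ y) : 0 ≤ wg n y ∧ wg n y ≤ (y/((n:ℝ)+1))^2 := by
  have ht : 0 ≤ y / ((n:ℝ)+1) := by positivity
  exact log_ineq ht

lemma summable_wg {y : ℝ} (hy : 0 ≤ y) : Summable (fun n => wg n y) := by
  have h : Summable (fun n : ℕ => 1/((n:ℝ)) ^ (2:ℕ)) := Real.summable_one_div_nat_pow.mpr one_lt_two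
  have h2 := ((summable_nat_add_iff 1).mpr h).mul_left (y^2)
  apply Summable.of_nonneg_of_le (fun n => (wg_bounds n y hy).1) (fun n => ?_) h2
  calc wg n y ≤ (y/((n:ℝ)+1))^2 := (wg_bounds n y hy).2
    _ = y^2 * (1/(((n:ℕ)+1:ℕ):ℝ)^(2:ℕ)) := by push_cast; rw [div_pow, mul_one_div]

lemma summable_wg' {x : ℝ} (hx : 0 ≤ x) : Summable (fun n : ℕ => wg' n x) := by
  have h : Summable (fun n : ℕ => 1/((n:ℝ)) ^ (2:ℕ)) := Real.summable_one_div_nat_pow.mpr one_lt_two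
  have h2 := ((summable_nat_add_iff 1).mpr h).mul_left x
  apply Summable.of_nonneg_of_le (fun n => ?_) (fun n => ?_) h2
  · have hn : (0:ℝ) < (n:ℝ)+1 := by positivity
    have : 1/((n:ℝ)+1+x) ≤ 1/((n:ℝ)+1) := by
      apply one_div_le_one_div_of_le hn; linarith
    simpa [wg'] using this
  · have hn : (0:ℝ) < (n:ℝ)+1 := by positivity
    have hny : (0:ℝ) < (n:ℝ)+1+x := by linarith
    have key : wg' n x = x / (((n:ℝ)+1)*((n:ℝ)+1+x)) := by
      unfold wg'; field_simp; ring
    rw [key]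
    have hle : x / (((n:ℝ)+1)*((n:ℝ)+1+x)) ≤ x / (((n:ℝ)+1)*((n:ℝ)+1)) := by
      apply div_le_div_of_nonneg_left hx (by positivity)
      nlinarith
    calc x / (((n:ℝ)+1)*((n:ℝ)+1+x)) ≤ x / (((n:ℝ)+1)*((n:ℝ)+1)) := hle
      _ = x * (1/(((n:ℕ)+1:ℕ):ℝ)^(2:ℕ)) := by push_cast; rw [mul_one_div]; ring_nf

lemma log_factorial_sum (N : ℕ) : ∑ n ∈ range N, Real.log ((n:ℝ)+1) = Real.log (N.factorial : ℝ) := by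
  induction N with
  | zero => simp
  | succ k ih =>
    rw [Finset.sum_range_succ, ih, Nat.factorial_succ]
    push_cast
    rw [Real.log_mul (by positivity) (by exact_mod_cast Nat.cast_ne_zero.mpr k.factorial_ne_zero)]
    ring

lemma harmonic_cast (N : ℕ) : ((harmonic N : ℚ) : ℝ) = ∑ n ∈ range N, 1/((n:ℝ)+1) := by
  rw [harmonic]; push_cast; simp [one_div]

lemma partial_eq {x : ℝ} (hx : 0 < x) (N : ℕ) :
    ∑ n ∈ range N, wg n x
      = x * (((harmonic N : ℚ):ℝ) - Real.log N) + Real.log x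
        + Real.BohrMollerup.logGammaSeq x N := by
  have hterm : ∀ n : ℕ, wg n x
      = x * (1/((n:ℝ)+1)) - Real.log (x + (n:ℝ) + 1) + Real.log ((n:ℝ)+1) := by
    intro n
    have hn : (0:ℝ) < (n:ℝ)+1 := by positivity
    have h1 : 1 + x / ((n:ℝ)+1) = (x + (n:ℝ) + 1) / ((n:ℝ)+1) := by field_simp; ring
    unfold wg
    rw [h1, Real.log_div (by positivity) hn.ne']
    ring
  rw [Finset.sum_congr rfl (fun n _ => hterm n), Finset.sum_add_distrib, Finset.sum_sub_distrib,
    ← Finset.mul_sum, log_factorial_sum, ← harmonic_cast]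
  rw [Real.BohrMollerup.logGammaSeq]
  rw [Finset.sum_range_succ' (fun m : ℕ => Real.log (x + (m:ℝ))) N]
  simp only [Nat.cast_add, Nat.cast_one, Nat.cast_zero, add_zero, ← add_assoc]
  ring

lemma tsum_wg_eq {x : ℝ} (hx : 0 < x) :
    ∑' n, wg n x = x * Real.eulerMascheroniConstant + Real.log x + Real.log (Real.Gamma x) := by
  have h1 : Tendsto (fun N => ∑ n ∈ range N, wg n x) atTop (𝓝 (∑' n, wg n x)) :=
    (summable_wg hx.le).hasSum.tendsto_sum_nat
  have h2 : Tendsto (fun N : ℕ => x * (((harmonic N : ℚ):ℝ) - Real.log N) + Real.log x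
        + Real.BohrMollerup.logGammaSeq x N) atTop
      (𝓝 (x * Real.eulerMascheroniConstant + Real.log x + Real.log (Real.Gamma x))) :=
    ((Real.tendsto_harmonic_sub_log.const_mul x).add tendsto_const_nhds).add
      (Real.BohrMollerup.tendsto_log_gamma hx)
  exact tendsto_nhds_unique h1 (h2.congr (fun N => (partial_eq hx N).symm))

lemma logGamma_eq {x : ℝ} (hx : 0 < x) :
    Real.log (Real.Gamma x)
      = (∑' n, wg n x) - Real.eulerMascheroniConstant * x - Real.log x := by
  have := tsum_wg_eq hx; linarith

lemma hasDerivAt_logGamma {x : ℝ} (hx : x ∈ Set.Ioo (0:ℝ) 2) :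
    HasDerivAt (fun y => Real.log (Real.Gamma y))
      ((∑' n, wg' n x) - Real.eulerMascheroniConstant - 1/x) x := by
  have hS : HasDerivAt (fun z => ∑' n, wg n z) (∑' n, wg' n x) x :=
    hasDerivAt_tsum_of_isPreconnected summable_base isOpen_Ioo (convex_Ioo 0 2).isPreconnected
      (fun n y hy => wg_hasDeriv n y hy.1)
      (fun n y hy => by
        rw [Real.norm_eq_abs, abs_of_nonneg (wg'_bounds n y hy.1.le hy.2.le).1]
        exact (wg'_bounds n y hy.1.le hy.2.le).2)
      (show (1:ℝ) ∈ Set.Ioo (0:ℝ) 2 by norm_num)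
      (summable_wg (by norm_num : (0:ℝ) ≤ 1)) hx
  have h2 : HasDerivAt
      (fun y : ℝ => (∑' n, wg n y) - Real.eulerMascheroniConstant * y - Real.log y)
      ((∑' n, wg' n x) - Real.eulerMascheroniConstant - 1/x) x := by
    have := (hS.sub ((hasDerivAt_id x).const_mul Real.eulerMascheroniConstant)).sub
      (Real.hasDerivAt_log hx.1.ne')
    exact this.congr_deriv (by simp [one_div])
  apply h2.congr_of_eventuallyEq
  filter_upwards [Ioi_mem_nhds hx.1] with y hy
  exact logGamma_eq hy

lemma digamma_eq {x : ℝ} (hx : x ∈ Set.Ioo (0:ℝ) 2) :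
    digamma x = (∑' n, wg' n x) - Real.eulerMascheroniConstant - 1/x :=
  (hasDerivAt_logGamma hx).deriv

/-! The term-wise analysis. -/

noncomputable def Dterm (m z : ℝ) : ℝ :=
  (1/(m - z/2) + 1/(m + z/2)) - (1/(m - z) + 1/(m + z))

lemma Dterm_closed {m z : ℝ} (hm : 1 ≤ m) (h0 : 0 ≤ z) (h1 : z < 1) :
    Dterm m z = -(3/2) * m * (z^2 / ((m^2 - z^2/4) * (m^2 - z^2))) := by
  have p1 : (0:ℝ) < m - z := by linarith
  have p2 : (0:ℝ) < m - z/2 := by linarith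
  have p3 : (0:ℝ) < m + z/2 := by linarith
  have p4 : (0:ℝ) < m + z := by linarith
  have p5 : (0:ℝ) < m^2 - z^2/4 := by nlinarith
  have p6 : (0:ℝ) < m^2 - z^2 := by nlinarith
  have n1 := p1.ne'
  have n2 := p2.ne'
  have n3 := p3.ne'
  have n4 := p4.ne'
  have e5 : m^2 - z^2/4 = (m - z/2)*(m + z/2) := by ring
  have e6 : m^2 - z^2 = (m - z)*(m + z) := by ring
  have n2' : m*2 - z ≠ 0 := by intro h; apply n2; linarith
  have n3' : m*2 + z ≠ 0 := by intro h; apply n3; linarith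
  have hD : ((m^2 - z^2/4) * (m^2 - z^2)) ≠ 0 := by positivity
  rw [show -(3/2) * m * (z^2 / ((m^2 - z^2/4) * (m^2 - z^2)))
      = (-(3/2) * m * z^2) / ((m^2 - z^2/4) * (m^2 - z^2)) from by ring, eq_div_iff hD]
  unfold Dterm
  rw [e5, e6]
  field_simp
  ring

lemma Dterm_mono {m : ℝ} (hm : 1 ≤ m) {a b : ℝ} (ha : 0 ≤ a) (hab : a ≤ b) (hb : b < 1) :
    Dterm m b ≤ Dterm m a := by
  have hb0 : 0 ≤ b := ha.trans hab
  have ha1 : a < 1 := lt_of_le_of_lt hab hb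
  rw [Dterm_closed hm ha ha1, Dterm_closed hm hb0 hb]
  have hm2 : 1 ≤ m^2 := by nlinarith
  have pb5 : (0:ℝ) < m^2 - b^2/4 := by nlinarith
  have pb6 : (0:ℝ) < m^2 - b^2 := by nlinarith
  have key : a^2 / ((m^2 - a^2/4)*(m^2 - a^2)) ≤ b^2 / ((m^2 - b^2/4)*(m^2 - b^2)) := by
    apply div_le_div₀ (by positivity) (by nlinarith) (by positivity) ?_
    have h1 : m^2 - b^2/4 ≤ m^2 - a^2/4 := by nlinarith
    have h2 : m^2 - b^2 ≤ m^2 - a^2 := by nlinarith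
    nlinarith
  nlinarith [mul_le_mul_of_nonneg_left key (show (0:ℝ) ≤ (3/2)*m by linarith)]

lemma Dterm_nonpos {m : ℝ} (hm : 1 ≤ m) {z : ℝ} (h0 : 0 ≤ z) (h1 : z < 1) :
    Dterm m z ≤ 0 := by
  have h := Dterm_mono hm le_rfl h0 h1
  have h0' : Dterm m 0 = 0 := by simp [Dterm]
  linarith [h, h0'.ge]

lemma term_identity {z : ℝ} (n : ℕ) :
    (wg' n (1-z) + wg' n (1+z)) - wg' n (1-z/2) - wg' n (1+z/2)
      = Dterm ((n:ℝ)+2) z := by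
  unfold wg' Dterm
  rw [show ((n:ℝ)+1+(1-z)) = ((n:ℝ)+2-z) from by ring,
    show ((n:ℝ)+1+(1+z)) = ((n:ℝ)+2+z) from by ring,
    show ((n:ℝ)+1+(1-z/2)) = ((n:ℝ)+2-z/2) from by ring,
    show ((n:ℝ)+1+(1+z/2)) = ((n:ℝ)+2+z/2) from by ring]
  ring

lemma summable_D {z : ℝ} (hz : z ∈ Set.Ico (0:ℝ) 1) :
    Summable (fun n : ℕ => Dterm ((n:ℝ)+2) z) := by
  obtain ⟨h0, h1⟩ := hz
  have s1 := summable_wg' (x := 1-z) (by linarith)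
  have s2 := summable_wg' (x := 1+z) (by linarith)
  have s3 := summable_wg' (x := 1-z/2) (by linarith)
  have s4 := summable_wg' (x := 1+z/2) (by linarith)
  exact (((s1.add s2).sub s3).sub s4).congr (fun n => term_identity n)

lemma PsiI_eq {z : ℝ} (hz : z ∈ Set.Ico (0:ℝ) 1) :
    PsiI z = Dterm 1 z + ∑' n : ℕ, Dterm ((n:ℝ)+2) z := by
  obtain ⟨h0, h1⟩ := hz
  have m1 : (1 - z) ∈ Set.Ioo (0:ℝ) 2 := ⟨by linarith, by linarith⟩
  have m2 : (1 + z) ∈ Set.Ioo (0:ℝ) 2 := ⟨by linarith, by linarith⟩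
  have m3 : (1 - z/2) ∈ Set.Ioo (0:ℝ) 2 := ⟨by linarith, by linarith⟩
  have m4 : (1 + z/2) ∈ Set.Ioo (0:ℝ) 2 := ⟨by linarith, by linarith⟩
  have s1 := summable_wg' (x := 1-z) (by linarith)
  have s2 := summable_wg' (x := 1+z) (by linarith)
  have s3 := summable_wg' (x := 1-z/2) (by linarith)
  have s4 := summable_wg' (x := 1+z/2) (by linarith)
  have hT : (∑' n, wg' n (1-z)) + (∑' n, wg' n (1+z)) - (∑' n, wg' n (1-z/2))
      - (∑' n, wg' n (1+z/2)) = ∑' n : ℕ, Dterm ((n:ℝ)+2) z := by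
    rw [← Summable.tsum_add s1 s2, ← Summable.tsum_sub (s1.add s2) s3, ← Summable.tsum_sub ((s1.add s2).sub s3) s4]
    exact tsum_congr (fun n => term_identity n)
  have hD1 : Dterm 1 z = (1/(1 - z/2) + 1/(1 + z/2)) - (1/(1 - z) + 1/(1 + z)) := rfl
  rw [PsiI, digamma_eq m1, digamma_eq m2, digamma_eq m3, digamma_eq m4, hD1, ← hT]
  ring

theorem PsiI_nonpos_and_decreasing :
    (∀ z ∈ Set.Ico (0 : ℝ) 1, PsiI z ≤ 0) ∧ AntitoneOn PsiI (Set.Ico (0 : ℝ) 1) := by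
  constructor
  · intro z hz
    rw [PsiI_eq hz]
    have h1 : Dterm 1 z ≤ 0 := Dterm_nonpos le_rfl hz.1 hz.2
    have h2 : ∑' n : ℕ, Dterm ((n:ℝ)+2) z ≤ 0 :=
      tsum_nonpos (fun n => Dterm_nonpos (by have : (0:ℝ) ≤ (n:ℝ) := Nat.cast_nonneg n; linarith) hz.1 hz.2)
    linarith
  · intro a ha b hb hab
    rw [PsiI_eq ha, PsiI_eq hb]
    have hts := Summable.tsum_le_tsum
      (fun n : ℕ => Dterm_mono (m := (n:ℝ)+2)
        (by have : (0:ℝ) ≤ (n:ℝ) := Nat.cast_nonneg n; linarith) ha.1 hab hb.2)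
      (summable_D hb) (summable_D ha)
    have hd1 := Dterm_mono le_rfl ha.1 hab hb.2
    linarith
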